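/- Let Ω ⊆ ℝⁿ be a nonempty closed convex set and let F : ℝⁿ → ℝⁿ be continuous and monotone on Ω and coercive with respect to Ω. Then the dual gap function G(x) = sup_{y∈Ω} ⟨F(y), x − y⟩ is finite for every x ∈ Ω, and for every x ∈ Ω the supremum is attained at some ȳ ∈ Ω. -/
import Mathlib


open Set
open scoped InnerProductSpace

/-- For F continuous, monotone and coercive with respect to Ω, the dual
gap function G(x) = sup_{y ∈ Ω} ⟨F(y), x - y⟩ is finite on Ω and the supremum is
attained at some ybar ∈ Ω. -/
theorem dual_gap_finite_and_attained {n : ℕ}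
    (Ω : Set (EuclideanSpace ℝ (Fin n)))
    (hne : Ω.Nonempty) (hcl : IsClosed Ω) (hconv : Convex ℝ Ω)
    (F : EuclideanSpace ℝ (Fin n) → EuclideanSpace ℝ (Fin n))
    (hFcont : ContinuousOn F Ω)
    (hFmono : ∀ x ∈ Ω, ∀ y ∈ Ω, 0 ≤ ⟪F x - F y, x - y⟫_ℝ)
    (hcoer : ∃ γ : ℝ, 0 < γ ∧ ∀ x₀ ∈ Ω, ∃ c : ℝ, 0 < c ∧ ∃ R : ℝ,
      ∀ x ∈ Ω, R ≤ ‖x‖ → c ≤ ⟪F x, x - x₀⟫_ℝ / ‖x‖ ^ γ) :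
    ∀ x ∈ Ω,
      BddAbove ((fun y => ⟪F y, x - y⟫_ℝ) '' Ω) ∧
      ∃ ybar ∈ Ω, ∀ y ∈ Ω, ⟪F y, x - y⟫_ℝ ≤ ⟪F ybar, x - ybar⟫_ℝ := by
  intro x hx
  obtain ⟨γ, hγ, hco⟩ := hcoer
  obtain ⟨c, hc, R, hR⟩ := hco x hx
  set f : EuclideanSpace ℝ (Fin n) → ℝ := fun y => ⟪F y, x - y⟫_ℝ with hf
  set R' : ℝ := max (max R ‖x‖) 1 with hR'
  set K : Set (EuclideanSpace ℝ (Fin n)) := Ω ∩ Metric.closedBall 0 R' with hK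
  have hKc : IsCompact K :=
    (isCompact_closedBall (0 : EuclideanSpace ℝ (Fin n)) R').inter_left hcl
  have hxK : x ∈ K := by
    refine ⟨hx, ?_⟩
    simp only [Metric.mem_closedBall, dist_zero_right]
    exact le_trans (le_max_right R ‖x‖) (le_trans (le_max_left _ 1) le_rfl)
  have hfcont : ContinuousOn f K := by
    apply ContinuousOn.inner (hFcont.mono inter_subset_left)
    exact (continuous_const.sub continuous_id).continuousOn
  obtain ⟨ybar, hybarK, hmax⟩ := hKc.exists_isMaxOn ⟨x, hxK⟩ hfcont
  have hfx : f x = 0 := by simp [hf]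
  have hout : ∀ y ∈ Ω, R' < ‖y‖ → f y ≤ 0 := by
    intro y hy hny
    have h1 : (1 : ℝ) ≤ ‖y‖ := le_of_lt (lt_of_le_of_lt (le_max_right _ 1) hny)
    have hpow : 0 < ‖y‖ ^ γ := Real.rpow_pos_of_pos (by linarith) γ
    have := hR y hy (le_of_lt (lt_of_le_of_lt
      (le_trans (le_max_left R ‖x‖) (le_max_left _ 1)) hny))
    have h2 : 0 < ⟪F y, y - x⟫_ℝ := by
      have := (le_div_iff₀ hpow).mp this
      nlinarith
    have heq : f y = -⟪F y, y - x⟫_ℝ := by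
      rw [hf]; dsimp only
      rw [← neg_sub y x, inner_neg_right]
    linarith
  have key : ∀ y ∈ Ω, f y ≤ f ybar := by
    intro y hy
    by_cases hb : ‖y‖ ≤ R'
    · exact hmax ⟨hy, by simpa [Metric.mem_closedBall, dist_zero_right] using hb⟩
    · have h0 : f y ≤ 0 := hout y hy (not_le.mp hb)
      have : f x ≤ f ybar := hmax hxK
      linarith [hfx ▸ this]
  refine ⟨⟨f ybar, ?_⟩, ybar, hybarK.1, key⟩
  rintro v ⟨y, hy, rfl⟩
  exact key y hy
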